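/- Let p > 3 be prime, Q₀ a positive integer with p ∣ Q₀, L ≥ 1, and Q₁, …, Q_L positive integers each coprime to Q₀. Let h₁, …, h_L be integers, and for each I ⊆ {1,…,L} set H_I := ∑_{i ∈ I} Q_i h_i. Define T := {H_I mod p : I ⊆ {1,…,L}}, μ(τ) := #{I : |I| even, H_I ≡ τ (mod p)} and ν(τ) := #{I : |I| odd, H_I ≡ τ (mod p)}. If 3 divides μ(τ) − ν(τ) for all τ ∈ T, then p divides h_i for some 1 ≤ i ≤ L. -/

import Mathlib

open Finset

section aux
variable {p : ℕ} [NeZero p] {K : Type*} [CommRing K] {ζ : K}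

lemma aux_pow_val_add (hζ : IsPrimitiveRoot ζ p) (x y : ZMod p) :
    ζ ^ (x + y).val = ζ ^ x.val * ζ ^ y.val := by
  rw [ZMod.val_add]
  have := pow_mod_orderOf ζ (x.val + y.val)
  rw [← hζ.eq_orderOf] at this
  rw [this, pow_add]

lemma aux_pow_val_sum (hζ : IsPrimitiveRoot ζ p) {ι : Type*} (I : Finset ι) (g : ι → ZMod p) :
    ζ ^ (∑ i ∈ I, g i).val = ∏ i ∈ I, ζ ^ (g i).val := by
  classical
  induction I using Finset.cons_induction with
  | empty => simp [ZMod.val_zero]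
  | cons a s ha ih =>
    rw [Finset.sum_cons, Finset.prod_cons, aux_pow_val_add hζ, ih]

end aux

/-- Let `p > 3` be prime, `Q₀` positive with `p ∣ Q₀`, `L ≥ 1`, and `Q₁,…,Q_L` positive
integers coprime to `Q₀`. Given integers `h₁,…,h_L`, set `H_I := ∑_{i ∈ I} Q_i h_i`.
If, for every residue `τ` mod `p`, `3` divides
`#{I : |I| even, H_I ≡ τ} − #{I : |I| odd, H_I ≡ τ}`, then `p ∣ h_i` for some `i`. -/
theorem exists_p_dvd_of_multiplicity_congruence (p : ℕ) (hp : p.Prime) (hp3 : 3 < p)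
    (Q₀ : ℕ) (hQ₀ : 0 < Q₀) (hpQ₀ : p ∣ Q₀) (L : ℕ) (hL : 1 ≤ L)
    (Q : Fin L → ℕ) (hQpos : ∀ i, 0 < Q i) (hQco : ∀ i, Nat.Coprime (Q i) Q₀)
    (h : Fin L → ℤ)
    (hyp : ∀ τ : ZMod p,
      (3 : ℤ) ∣
        ((Nat.card {I : Finset (Fin L) //
            Even I.card ∧ ((∑ i ∈ I, (Q i : ℤ) * h i : ℤ) : ZMod p) = τ} : ℤ) -
         (Nat.card {I : Finset (Fin L) //
            Odd I.card ∧ ((∑ i ∈ I, (Q i : ℤ) * h i : ℤ) : ZMod p) = τ} : ℤ))) :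
    ∃ i, (p : ℤ) ∣ h i := by
  classical
  by_contra hcon
  push_neg at hcon
  haveI hpf : Fact p.Prime := ⟨hp⟩
  haveI : NeZero p := ⟨hp.ne_zero⟩
  haveI h3f : Fact (Nat.Prime 3) := ⟨by norm_num⟩
  have h3p : ¬ (3 ∣ p) := by
    intro hd
    rcases (Nat.Prime.eq_one_or_self_of_dvd hp 3 hd) with h1 | h1 <;> omega
  -- the cyclotomic field of characteristic 3
  set pp : ℕ+ := ⟨p, hp.pos⟩ with hpp
  haveI : NeZero ((pp : ℕ) : ZMod 3) := by
    refine ⟨?_⟩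
    simpa [ZMod.natCast_eq_zero_iff, hpp] using h3p
  set K := CyclotomicField pp (ZMod 3) with hK
  obtain ⟨ζ, hζ⟩ := IsCyclotomicExtension.exists_isPrimitiveRoot (ZMod 3) K
    (Set.mem_singleton (pp : ℕ)) (PNat.ne_zero pp)
  have hζp : IsPrimitiveRoot ζ p := hζ
  -- the additive character
  set f : ZMod p → K := fun x => ζ ^ x.val with hf
  have hf_add : ∀ x y : ZMod p, f (x + y) = f x * f y := fun x y => aux_pow_val_add hζp x y
  have hf_sum : ∀ (I : Finset (Fin L)) (g : Fin L → ZMod p),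
      f (∑ i ∈ I, g i) = ∏ i ∈ I, f (g i) := fun I g => aux_pow_val_sum hζp I g
  -- 3 = 0 in K
  haveI hchar : CharP K 3 := charP_of_injective_algebraMap (algebraMap (ZMod 3) K).injective 3
  have h30 : (3 : K) = 0 := by
    have := CharP.cast_eq_zero K 3
    push_cast at this
    exact this
  -- (p : K) ≠ 0
  have hpK : (p : K) ≠ 0 := by
    intro hz
    exact h3p ((CharP.cast_eq_zero_iff K 3 p).mp hz)
  -- the coefficients
  set c : Fin L → ZMod p := fun i => (((Q i : ℤ) * h i : ℤ) : ZMod p) with hc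
  have hc0 : ∀ i, c i ≠ 0 := by
    intro i hz
    rw [hc] at hz
    simp only [ZMod.intCast_zmod_eq_zero_iff_dvd] at hz
    rcases (Int.Prime.dvd_mul' hp hz) with hd | hd
    · have hdQ : p ∣ Q i := by exact_mod_cast hd
      have : p ∣ Nat.gcd (Q i) Q₀ := Nat.dvd_gcd hdQ hpQ₀
      rw [hQco i] at this
      have := Nat.le_of_dvd one_pos this
      omega
    · exact hcon i hd
  -- Step A: expansion and vanishing: for all a, ∏ i, (1 - f (a * c i)) = 0
  have stepA : ∀ a : ZMod p, (∏ i : Fin L, (1 - f (a * c i))) = 0 := by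
    intro a
    have expand : (∏ i : Fin L, (1 - f (a * c i)))
        = ∑ I : Finset (Fin L), (-1 : K) ^ I.card *
            f (a * (((∑ i ∈ I, (Q i : ℤ) * h i : ℤ) : ZMod p))) := by
      have := Finset.prod_add (fun i : Fin L => - f (a * c i)) (fun _ => (1 : K)) univ
      simp only [prod_const_one, mul_one] at this
      calc (∏ i : Fin L, (1 - f (a * c i)))
          = ∏ i : Fin L, (- f (a * c i) + 1) := by
            refine Finset.prod_congr rfl fun i _ => by ring
        _ = ∑ I ∈ univ.powerset, ∏ i ∈ I, (- f (a * c i)) := this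
        _ = ∑ I : Finset (Fin L), ∏ i ∈ I, (- f (a * c i)) := by
            rw [Finset.powerset_univ]
        _ = _ := by
            refine Finset.sum_congr rfl fun I _ => ?_
            have : ∀ i ∈ I, - f (a * c i) = (-1 : K) * f (a * c i) := fun i _ => by ring
            rw [Finset.prod_congr rfl this, Finset.prod_mul_distrib, Finset.prod_const]
            congr 1
            rw [← hf_sum I (fun i => a * c i), ← Finset.mul_sum]
            congr 2
            rw [hc]
            push_cast
            rfl
    rw [expand]
    -- group by the value of H_I mod p
    rw [← Finset.sum_fiberwise (univ : Finset (Finset (Fin L)))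
      (fun I => (((∑ i ∈ I, (Q i : ℤ) * h i : ℤ) : ZMod p))) ]
    refine Finset.sum_eq_zero fun τ _ => ?_
    have hconst : ∀ I ∈ univ.filter
        (fun I : Finset (Fin L) => (((∑ i ∈ I, (Q i : ℤ) * h i : ℤ) : ZMod p)) = τ),
        (-1 : K) ^ I.card * f (a * (((∑ i ∈ I, (Q i : ℤ) * h i : ℤ) : ZMod p)))
          = (-1 : K) ^ I.card * f (a * τ) := by
      intro I hI
      rw [Finset.mem_filter] at hI
      rw [hI.2]
    rw [Finset.sum_congr rfl hconst, ← Finset.sum_mul]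
    have key : (∑ I ∈ univ.filter
        (fun I : Finset (Fin L) => (((∑ i ∈ I, (Q i : ℤ) * h i : ℤ) : ZMod p)) = τ),
        (-1 : K) ^ I.card) = 0 := by
      set P : Finset (Fin L) → Prop := fun I => (((∑ i ∈ I, (Q i : ℤ) * h i : ℤ) : ZMod p)) = τ
        with hP
      have hsplit : (∑ I ∈ univ.filter P, (-1 : K) ^ I.card)
          = ((univ.filter (fun I : Finset (Fin L) => Even I.card ∧ P I)).card : K)
            - ((univ.filter (fun I : Finset (Fin L) => Odd I.card ∧ P I)).card : K) := by
        have step1 : (∑ I ∈ univ.filter P, (-1 : K) ^ I.card)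
            = ∑ I ∈ univ.filter P, (if Even I.card then (1 : K) else -1) := by
          refine Finset.sum_congr rfl fun I _ => ?_
          by_cases hE : Even I.card
          · rw [if_pos hE, Even.neg_one_pow hE]
          · rw [if_neg hE, Odd.neg_one_pow (Nat.not_even_iff_odd.mp hE)]
        rw [step1, Finset.sum_ite, Finset.sum_const, Finset.sum_const,
          Finset.filter_filter, Finset.filter_filter]
        have e1 : (univ.filter fun I : Finset (Fin L) => P I ∧ Even I.card)
            = univ.filter (fun I : Finset (Fin L) => Even I.card ∧ P I) := by
          refine Finset.filter_congr fun I _ => ?_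
          exact and_comm
        have e2 : (univ.filter fun I : Finset (Fin L) => P I ∧ ¬ Even I.card)
            = univ.filter (fun I : Finset (Fin L) => Odd I.card ∧ P I) := by
          refine Finset.filter_congr fun I _ => ?_
          rw [Nat.not_even_iff_odd]
          exact and_comm
        rw [e1, e2]
        simp only [nsmul_eq_mul, mul_one, mul_neg]
        ring
      rw [hsplit]
      have hcard1 : Nat.card {I : Finset (Fin L) //
          Even I.card ∧ ((∑ i ∈ I, (Q i : ℤ) * h i : ℤ) : ZMod p) = τ}
          = (univ.filter (fun I : Finset (Fin L) => Even I.card ∧ P I)).card := by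
        rw [Nat.card_eq_fintype_card, Fintype.card_subtype]
      have hcard2 : Nat.card {I : Finset (Fin L) //
          Odd I.card ∧ ((∑ i ∈ I, (Q i : ℤ) * h i : ℤ) : ZMod p) = τ}
          = (univ.filter (fun I : Finset (Fin L) => Odd I.card ∧ P I)).card := by
        rw [Nat.card_eq_fintype_card, Fintype.card_subtype]
      obtain ⟨m, hm⟩ := hyp τ
      rw [hcard1, hcard2] at hm
      have : (((univ.filter (fun I : Finset (Fin L) => Even I.card ∧ P I)).card : ℤ)
          - ((univ.filter (fun I : Finset (Fin L) => Odd I.card ∧ P I)).card : ℤ) : ℤ)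
          = 3 * m := hm
      calc ((univ.filter (fun I : Finset (Fin L) => Even I.card ∧ P I)).card : K)
            - ((univ.filter (fun I : Finset (Fin L) => Odd I.card ∧ P I)).card : K)
          = ((((univ.filter (fun I : Finset (Fin L) => Even I.card ∧ P I)).card : ℤ)
            - ((univ.filter (fun I : Finset (Fin L) => Odd I.card ∧ P I)).card : ℤ) : ℤ) : K) := by
            push_cast
            ring
        _ = ((3 * m : ℤ) : K) := by rw [this]
        _ = 3 * (m : K) := by push_cast; ring
        _ = 0 := by rw [h30, zero_mul]
    rw [key, zero_mul]
  -- Step B: the product over nonzero a equals p^L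
  have stepB : (∏ a ∈ univ.filter (fun a : ZMod p => a ≠ 0),
      ∏ i : Fin L, (1 - f (a * c i))) = (p : K) ^ L := by
    rw [Finset.prod_comm]
    have inner : ∀ i : Fin L, (∏ a ∈ univ.filter (fun a : ZMod p => a ≠ 0),
        (1 - f (a * c i))) = (p : K) := by
      intro i
      have reindex : (∏ a ∈ univ.filter (fun a : ZMod p => a ≠ 0), (1 - f (a * c i)))
          = ∏ b ∈ univ.filter (fun b : ZMod p => b ≠ 0), (1 - f b) := by
        refine Finset.prod_bij' (fun a _ => a * c i) (fun b _ => b * (c i)⁻¹) ?_ ?_ ?_ ?_ ?_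
        · intro a ha
          rw [Finset.mem_filter] at ha ⊢
          exact ⟨Finset.mem_univ _, mul_ne_zero ha.2 (hc0 i)⟩
        · intro b hb
          rw [Finset.mem_filter] at hb ⊢
          exact ⟨Finset.mem_univ _, mul_ne_zero hb.2 (inv_ne_zero (hc0 i))⟩
        · intro a ha
          show a * c i * (c i)⁻¹ = a
          rw [mul_assoc, mul_inv_cancel₀ (hc0 i), mul_one]
        · intro b hb
          show b * (c i)⁻¹ * c i = b
          rw [mul_assoc, inv_mul_cancel₀ (hc0 i), mul_one]
        · intro a ha
          rfl
      rw [reindex]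
      have hζ' : IsPrimitiveRoot ζ ((p - 1) + 1) := by
        have : p - 1 + 1 = p := Nat.succ_pred_eq_of_pos hp.pos
        rw [this]
        exact hζp
      have base := hζ'.prod_one_sub_pow_eq_order
      have reindex2 : (∏ b ∈ univ.filter (fun b : ZMod p => b ≠ 0), (1 - f b))
          = ∏ k ∈ range (p - 1), (1 - ζ ^ (k + 1)) := by
        refine Finset.prod_bij' (fun (b : ZMod p) _ => b.val - 1)
          (fun k _ => ((k + 1 : ℕ) : ZMod p)) ?_ ?_ ?_ ?_ ?_
        · intro b hb
          rw [Finset.mem_filter] at hb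
          have h1 : b.val < p := ZMod.val_lt b
          have h2 : b.val ≠ 0 := fun hz => hb.2 ((ZMod.val_eq_zero b).mp hz)
          show b.val - 1 ∈ range (p - 1)
          rw [Finset.mem_range]
          omega
        · intro k hk
          rw [Finset.mem_range] at hk
          show ((k + 1 : ℕ) : ZMod p) ∈ filter (fun b : ZMod p => b ≠ 0) univ
          rw [Finset.mem_filter]
          refine ⟨Finset.mem_univ _, fun hz => ?_⟩
          have hv : ((k + 1 : ℕ) : ZMod p).val = (k + 1) % p := ZMod.val_natCast p (k + 1)
          rw [hz, ZMod.val_zero] at hv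
          rw [Nat.mod_eq_of_lt (by omega)] at hv
          omega
        · intro b hb
          rw [Finset.mem_filter] at hb
          have h2 : b.val ≠ 0 := fun hz => hb.2 ((ZMod.val_eq_zero b).mp hz)
          show ((b.val - 1 + 1 : ℕ) : ZMod p) = b
          have hv : b.val - 1 + 1 = b.val := by omega
          rw [hv]
          exact ZMod.natCast_rightInverse b
        · intro k hk
          rw [Finset.mem_range] at hk
          show ((k + 1 : ℕ) : ZMod p).val - 1 = k
          rw [ZMod.val_natCast, Nat.mod_eq_of_lt (by omega)]
          omega
        · intro b hb
          rw [Finset.mem_filter] at hb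
          have h1 : b.val < p := ZMod.val_lt b
          have h2 : b.val ≠ 0 := fun hz => hb.2 ((ZMod.val_eq_zero b).mp hz)
          show 1 - f b = 1 - ζ ^ (b.val - 1 + 1)
          have hv : b.val - 1 + 1 = b.val := by omega
          rw [hv]
      rw [reindex2, base]
      have : ((p - 1 : ℕ) : K) = (p : K) - 1 := by
        have h1 : 1 ≤ p := hp.pos
        push_cast [Nat.cast_sub h1]
        ring
      rw [this]
      ring
    rw [Finset.prod_congr rfl (fun i _ => inner i), Finset.prod_const, Finset.card_univ,
      Fintype.card_fin]
  -- contradiction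
  have hne : (univ.filter (fun a : ZMod p => a ≠ 0)).Nonempty := by
    refine ⟨1, ?_⟩
    simp only [mem_filter, mem_univ, true_and]
    exact one_ne_zero
  obtain ⟨a0, ha0⟩ := hne
  have : (∏ a ∈ univ.filter (fun a : ZMod p => a ≠ 0),
      ∏ i : Fin L, (1 - f (a * c i))) = 0 :=
    Finset.prod_eq_zero ha0 (stepA a0)
  rw [stepB] at this
  exact pow_ne_zero L hpK this
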